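/- arXiv:1602.07362 — 4 statements merged into one kernel-verified Lean document; each statement's English description precedes it below -/
import Mathlib

section
/- If s is a strictly proper scoring rule with range in [0,1] and α > 0, then for each bettor i with wager m_i > 0, the expected profit E_{ω∼p*}[m_i(α·s(p_i,ω) - (Σ_j m_j α·s(p_j,ω))/(Σ_j m_j))] with fixed reports of others is uniquely maximized over p_i at p_i = p*, provided m_i < Σ_j m_j. -/
/-- Truthfulness: with a strictly proper scoring rule `s` and `α > 0`, bettor `i`'s
expected profit under the (scaled) weighted score wagering mechanism is uniquely
maximized by reporting her true belief `p*`. -/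
theorem wswm_truthful
    (n : ℕ) (m : Fin n → ℝ) (p : Fin n → ℝ) (i : Fin n)
    (s : ℝ → Bool → ℝ) (α pstar : ℝ) (hα : 0 < α)
    (hproper : ∀ p' q', p' ∈ Set.Icc (0:ℝ) 1 → q' ∈ Set.Icc (0:ℝ) 1 → p' ≠ q' →
      p' * s p' true + (1 - p') * s p' false > p' * s q' true + (1 - p') * s q' false)
    (hrange : ∀ q' ω, s q' ω ∈ Set.Icc (0:ℝ) 1)
    (hm : ∀ j, 0 ≤ m j) (hmi : 0 < m i) (hmlt : m i < ∑ j, m j)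
    (hpstar : pstar ∈ Set.Icc (0:ℝ) 1) :
    ∀ r ∈ Set.Icc (0:ℝ) 1, r ≠ pstar →
      (pstar * (m i * (α * s pstar true -
          (∑ j, m j * (α * s (Function.update p i pstar j) true)) / (∑ j, m j)))
        + (1 - pstar) * (m i * (α * s pstar false -
          (∑ j, m j * (α * s (Function.update p i pstar j) false)) / (∑ j, m j))))
      >
      (pstar * (m i * (α * s r true -
          (∑ j, m j * (α * s (Function.update p i r j) true)) / (∑ j, m j)))
        + (1 - pstar) * (m i * (α * s r false -
          (∑ j, m j * (α * s (Function.update p i r j) false)) / (∑ j, m j)))) := by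
  intro r hr hne
  have hM : (0:ℝ) < ∑ j, m j := hmi.trans hmlt
  set M : ℝ := ∑ j, m j with hMdef
  have hMne : M ≠ 0 := ne_of_gt hM
  have hsum : ∀ (x : ℝ) (ω : Bool),
      (∑ j, m j * (α * s (Function.update p i x j) ω))
        = m i * (α * s x ω) + ∑ j ∈ Finset.univ.erase i, m j * (α * s (p j) ω) := by
    intro x ω
    rw [← Finset.add_sum_erase _ _ (Finset.mem_univ i)]
    congr 1
    · simp
    · exact Finset.sum_congr rfl fun j hj => by
        rw [Function.update_of_ne (Finset.ne_of_mem_erase hj)]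
  rw [hsum, hsum, hsum, hsum]
  set CT : ℝ := ∑ j ∈ Finset.univ.erase i, m j * (α * s (p j) true)
  set CF : ℝ := ∑ j ∈ Finset.univ.erase i, m j * (α * s (p j) false)
  have key := hproper pstar r hpstar hr (Ne.symm hne)
  have hfac : 0 < m i * α * (1 - m i / M) := by
    have h1 : 0 < 1 - m i / M := by
      rw [sub_pos, div_lt_one hM]; exact hmlt
    positivity
  have heq :
      (pstar * (m i * (α * s pstar true - (m i * (α * s pstar true) + CT) / M))
        + (1 - pstar) * (m i * (α * s pstar false - (m i * (α * s pstar false) + CF) / M)))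
      - (pstar * (m i * (α * s r true - (m i * (α * s r true) + CT) / M))
        + (1 - pstar) * (m i * (α * s r false - (m i * (α * s r false) + CF) / M)))
      = m i * α * (1 - m i / M) *
        ((pstar * s pstar true + (1 - pstar) * s pstar false)
          - (pstar * s r true + (1 - pstar) * s r false)) := by
    field_simp
    ring
  have hpos : 0 < m i * α * (1 - m i / M) *
      ((pstar * s pstar true + (1 - pstar) * s pstar false)
        - (pstar * s r true + (1 - pstar) * s r false)) :=
    mul_pos hfac (sub_pos.mpr key)
  linarith [heq ▸ hpos]
end

section
/- For a convex differentiable function C : ℝ → ℝ and reals q*, q, x such that (x ≤ 0 implies q + x ≥ q*) and (x ≥ 0 implies q + x ≤ q*), one has C'(q*)·x - C(q + x) + C(q) ≥ 0. -/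
/-- Trading toward the target state yields non-negative expected profit:
for convex differentiable `C`, if the trade `x` does not cross `q*`,
then `C'(q*)·x - C(q+x) + C(q) ≥ 0`. -/
theorem profitable_trade_nonneg (C : ℝ → ℝ)
    (hconv : ConvexOn ℝ Set.univ C) (hdiff : Differentiable ℝ C)
    (qstar q x : ℝ)
    (hneg : x ≤ 0 → q + x ≥ qstar) (hpos : x ≥ 0 → q + x ≤ qstar) :
    deriv C qstar * x - C (q + x) + C q ≥ 0 := by
  rcases lt_trichotomy x 0 with hx | rfl | hx
  · -- x < 0 : qstar ≤ q + x < q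
    have h1 : qstar ≤ q + x := hneg hx.le
    have h2 : q + x < q := by linarith
    have hd : deriv C qstar ≤ slope C q qstar := by
      have := hconv.deriv_le_slope (Set.mem_univ qstar) (Set.mem_univ q)
        (lt_of_le_of_lt h1 h2) (hdiff qstar)
      rwa [slope_comm] at this
    have hm : slope C q qstar ≤ slope C q (q + x) :=
      hconv.slope_mono (Set.mem_univ q)
        ⟨Set.mem_univ _, by simp; linarith⟩ ⟨Set.mem_univ _, by simp; linarith⟩ h1
    have hs : slope C q (q + x) = (C (q + x) - C q) / x := by
      rw [slope_def_field]; ring_nf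
    have : deriv C qstar ≤ (C (q + x) - C q) / x := by rw [← hs]; linarith
    have := (le_div_iff_of_neg hx).mp this
    linarith
  · simp
  · -- x > 0 : q < q + x ≤ qstar
    have h1 : q + x ≤ qstar := hpos hx.le
    have h2 : q < q + x := by linarith
    have hm : slope C q (q + x) ≤ slope C q qstar :=
      hconv.slope_mono (Set.mem_univ q)
        ⟨Set.mem_univ _, by simp; linarith⟩ ⟨Set.mem_univ _, by simp; linarith⟩ h1
    have hd : slope C q qstar ≤ deriv C qstar :=
      hconv.slope_le_deriv (Set.mem_univ q) (Set.mem_univ qstar)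
        (lt_of_lt_of_le h2 h1) (hdiff qstar)
    have hs : slope C q (q + x) = (C (q + x) - C q) / x := by
      rw [slope_def_field]; ring_nf
    have : (C (q + x) - C q) / x ≤ deriv C qstar := by rw [← hs]; linarith
    have := (div_le_iff₀ hx).mp this
    linarith
end

section
/- Let q* ∈ ℝ, γ > 0, and let C be convex and differentiable. If q' ≥ q* + γ and x satisfies x ≤ -γ and q' + x ≥ q*, then C'(q*)·x - C(q' + x) + C(q') ≥ D_C(q* + γ, q*), where D_C is the Bregman divergence of C. -/
/-- Tangent line lower bound for a convex differentiable function. -/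
lemma tangent_le (C : ℝ → ℝ) (hconv : ConvexOn ℝ Set.univ C) (hdiff : Differentiable ℝ C)
    (z y : ℝ) (h : z ≤ y) : C z + deriv C z * (y - z) ≤ C y := by
  rcases eq_or_lt_of_le h with rfl | hlt
  · simp
  · have hs := hconv.deriv_le_slope (Set.mem_univ z) (Set.mem_univ y) hlt (hdiff z)
    rw [slope_def_field, le_div_iff₀ (sub_pos.mpr hlt)] at hs
    linarith

/-- Selling side: if the noisy state is at least `γ` above the target and the trader
sells at least `γ` shares without crossing the target, the market maker's expected
loss is at least the Bregman divergence `D_C(q* + γ, q*)`. -/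
theorem sell_loss_lower_bound (C : ℝ → ℝ)
    (hconv : ConvexOn ℝ Set.univ C) (hdiff : Differentiable ℝ C)
    (qstar γ q' x : ℝ) (hγ : 0 < γ)
    (hq' : q' ≥ qstar + γ) (hx : x ≤ -γ) (hqx : q' + x ≥ qstar) :
    deriv C qstar * x - C (q' + x) + C q' ≥
      C (qstar + γ) - C qstar - deriv C qstar * ((qstar + γ) - qstar) := by
  have hmono : MonotoneOn (deriv C) Set.univ :=
    hconv.monotoneOn_deriv (fun y _ => hdiff y)
  have hderivh : ∀ s : ℝ, HasDerivAt (fun s => C (s + γ) - C s)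
      (deriv C (s + γ) - deriv C s) s := by
    intro s
    have h1 : HasDerivAt (fun s => C (s + γ)) (deriv C (s + γ) * 1) s :=
      (hdiff (s + γ)).hasDerivAt.comp s ((hasDerivAt_id s).add_const γ)
    have h2 := h1.sub (hdiff s).hasDerivAt
    rw [mul_one] at h2
    exact h2
  have hhmono : Monotone (fun s => C (s + γ) - C s) := by
    apply monotone_of_deriv_nonneg
    · exact fun s => (hderivh s).differentiableAt
    · intro s
      rw [(hderivh s).deriv]
      have : deriv C s ≤ deriv C (s + γ) :=
        hmono (Set.mem_univ _) (Set.mem_univ _) (by linarith)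
      linarith
  have hshift : C (qstar + γ) - C qstar ≤ C (q' + x + γ) - C (q' + x) := hhmono hqx
  have hq'ge : q' + x + γ ≤ q' := by linarith
  have htan := tangent_le C hconv hdiff (q' + x + γ) q' hq'ge
  have hd : deriv C qstar ≤ deriv C (q' + x + γ) :=
    hmono (Set.mem_univ _) (Set.mem_univ _) (by linarith)
  have hxnn : 0 ≤ q' - (q' + x + γ) := by linarith
  have hprod : deriv C qstar * (q' - (q' + x + γ)) ≤
      deriv C (q' + x + γ) * (q' - (q' + x + γ)) :=
    mul_le_mul_of_nonneg_right hd hxnn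
  nlinarith [htan, hshift, hprod]
end

section
/- Let q* ∈ ℝ, γ > 0, and let C be convex and differentiable. If q' ≤ q* - γ and x satisfies x ≥ γ and q' + x ≤ q*, then C'(q*)·x - C(q' + x) + C(q') ≥ D_C(q* - γ, q*), where D_C is the Bregman divergence of C. -/
/-- Buying side: if the noisy state is at least `γ` below the target and the trader
buys at least `γ` shares without crossing the target, the market maker's expected
loss is at least the Bregman divergence `D_C(q* - γ, q*)`. -/
theorem buy_loss_lower_bound (C : ℝ → ℝ)
    (hconv : ConvexOn ℝ Set.univ C) (hdiff : Differentiable ℝ C)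
    (qstar γ q' x : ℝ) (hγ : 0 < γ)
    (hq' : q' ≤ qstar - γ) (hx : x ≥ γ) (hqx : q' + x ≤ qstar) :
    deriv C qstar * x - C (q' + x) + C q' ≥
      C (qstar - γ) - C qstar - deriv C qstar * ((qstar - γ) - qstar) := by
  have hmono : Monotone (deriv C) := by
    have := hconv.monotoneOn_deriv (fun y _ => hdiff y)
    intro a b hab
    exact this (Set.mem_univ a) (Set.mem_univ b) hab
  -- gradient inequalities
  have grad_lower : ∀ a b : ℝ, a ≤ b → deriv C a * (b - a) ≤ C b - C a := by
    intro a b hab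
    rcases eq_or_lt_of_le hab with rfl | h
    · simp
    · have this : deriv C a ≤ (C b - C a) / (b - a) := by
        have h2 := hconv.deriv_le_slope (Set.mem_univ a) (Set.mem_univ b) h (hdiff a)
        rwa [slope_def_field] at h2
      calc deriv C a * (b - a) ≤ (C b - C a) / (b - a) * (b - a) := by
            apply mul_le_mul_of_nonneg_right this (by linarith)
        _ = C b - C a := div_mul_cancel₀ _ (sub_ne_zero.mpr h.ne')
  have grad_upper : ∀ a b : ℝ, a ≤ b → C b - C a ≤ deriv C b * (b - a) := by
    intro a b hab
    rcases eq_or_lt_of_le hab with rfl | h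
    · simp
    · have h2 := hconv.slope_le_deriv (Set.mem_univ a) (Set.mem_univ b) h (hdiff b)
      rw [slope_def_field] at h2
      calc C b - C a = (C b - C a) / (b - a) * (b - a) := (div_mul_cancel₀ _ (sub_ne_zero.mpr h.ne')).symm
        _ ≤ deriv C b * (b - a) := mul_le_mul_of_nonneg_right h2 (by linarith)
  -- shift lemma: t ↦ C t - C (t - γ) is monotone
  have shift : ∀ u v : ℝ, u ≤ v → C u - C (u - γ) ≤ C v - C (v - γ) := by
    intro u v huv
    have hdg : ∀ t : ℝ, HasDerivAt (fun s => C s - C (s - γ))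
        (deriv C t - deriv C (t - γ)) t := by
      intro t
      have h1 : HasDerivAt C (deriv C t) t := (hdiff t).hasDerivAt
      have h2 : HasDerivAt (fun s => C (s - γ)) (deriv C (t - γ)) t := by
        have := ((hdiff (t - γ)).hasDerivAt).comp t ((hasDerivAt_id t).sub_const γ)
        simpa [Function.comp_def] using this
      exact h1.sub h2
    have hm : Monotone (fun s => C s - C (s - γ)) := by
      apply monotone_of_hasDerivAt_nonneg hdg
      rw [Pi.le_def]
      intro t
      have h5 : deriv C (t - γ) ≤ deriv C t := hmono (by linarith)
      simpa using sub_nonneg.mpr h5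
    exact hm huv
  set a := q' with ha
  set b := q' + x with hb
  have h1 : C (b - γ) - C a ≤ deriv C (b - γ) * (x - γ) := by
    have := grad_upper a (b - γ) (by simp [hb]; linarith)
    have heq : b - γ - a = x - γ := by simp [hb]; ring
    rwa [heq] at this
  have h2 : deriv C (b - γ) ≤ deriv C qstar := hmono (by linarith)
  have h3 : deriv C (b - γ) * (x - γ) ≤ deriv C qstar * (x - γ) :=
    mul_le_mul_of_nonneg_right h2 (by linarith)
  have h4 : C b - C (b - γ) ≤ C qstar - C (qstar - γ) := shift b qstar hqx
  nlinarith [h1, h3, h4]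
end
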